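/- In the edge-insertion setting, |F(G_k)| = |F(G_{k-1})| + |{φ ∈ F(G_{k-1}) : r_φ(u) = u, r_φ(v) ≠ u}|, where G_k is obtained from G_{k-1} by adding edge (u,v). -/
import Mathlib


open Finset

/-- A spanning converging forest of the digraph with edge relation `E`,
encoded by its successor map `f : V → Option V` (`f i = some j` means edge `(i,j)`
is in the forest, `f i = none` means `i` is a root).  Acyclicity is expressed by a
height function that strictly decreases along edges. -/
def IsSCF {V : Type*} (E : V → V → Prop) (f : V → Option V) : Prop :=
  (∀ i j, f i = some j → E i j) ∧ ∃ h : V → ℕ, ∀ i j, f i = some j → h j < h i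

open scoped Classical in
/-- The set `F` of all spanning converging forests of the digraph `E`. -/
noncomputable def forests {V : Type*} [Fintype V] [DecidableEq V]
    (E : V → V → Prop) : Finset (V → Option V) :=
  Finset.univ.filter (IsSCF E)

/-- The root `r_φ(i)` of the tree containing node `i` in the forest `f`:
follow successors until reaching a root. -/
def rootOf {V : Type*} [Fintype V] (f : V → Option V) (i : V) : V :=
  (fun x => (f x).getD x)^[Fintype.card V] i

/-- The combinatorial forest-matrix entry `ω_{ij} = |F_{ij}| / |F|`. -/
noncomputable def fOmega {V : Type*} [Fintype V] [DecidableEq V]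
    (E : V → V → Prop) (i j : V) : ℝ :=
  (((forests E).filter (fun f => rootOf f i = j)).card : ℝ) / ((forests E).card : ℝ)

/-- Expectation of `g` under a uniformly random spanning converging forest. -/
noncomputable def expVal {V : Type*} [Fintype V] [DecidableEq V]
    (E : V → V → Prop) (g : (V → Option V) → ℝ) : ℝ :=
  (∑ f ∈ forests E, g f) / ((forests E).card : ℝ)

/-- Variance of `g` under a uniformly random spanning converging forest. -/
noncomputable def varVal {V : Type*} [Fintype V] [DecidableEq V]
    (E : V → V → Prop) (g : (V → Option V) → ℝ) : ℝ :=
  expVal E (fun f => (g f - expVal E g) ^ 2)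

/-- The indicator estimator `ω̂_{ij}(φ) = 1_{r_φ(i) = j}`. -/
noncomputable def indEst {V : Type*} [Fintype V] [DecidableEq V]
    (i j : V) (f : V → Option V) : ℝ :=
  if rootOf f i = j then 1 else 0

/-- Out-degree `d_i` of node `i`. -/
def outDeg {V : Type*} [Fintype V] (E : V → V → Prop) [DecidableRel E] (i : V) : ℕ :=
  (Finset.univ.filter (fun j => E i j)).card

/-- In-neighbors `N⁻(j)` of node `j`. -/
def inNbrs {V : Type*} [Fintype V] (E : V → V → Prop) [DecidableRel E] (j : V) : Finset V :=
  Finset.univ.filter (fun k => E k j)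

/-- The out-degree Laplacian `L = D - A`. -/
noncomputable def lap {V : Type*} [Fintype V] [DecidableEq V]
    (E : V → V → Prop) [DecidableRel E] : Matrix V V ℝ :=
  Matrix.of fun i j => (if i = j then (outDeg E i : ℝ) else 0) - (if E i j then (1 : ℝ) else 0)

/-- The forest matrix `Ω = (I + L)⁻¹`. -/
noncomputable def forestMatrix {V : Type*} [Fintype V] [DecidableEq V]
    (E : V → V → Prop) [DecidableRel E] : Matrix V V ℝ :=
  (1 + lap E)⁻¹


section InsertAux

variable {V : Type*} [Fintype V] [DecidableEq V]

private def stp (f : V → Option V) (x : V) : V := (f x).getD x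

private lemma rootOf_def (f : V → Option V) (i : V) :
    rootOf f i = (stp f)^[Fintype.card V] i := rfl

private lemma hmono {f : V → Option V} {h : V → ℕ}
    (hh : ∀ i j, f i = some j → h j < h i) (n : ℕ) (i : V) :
    h ((stp f)^[n] i) ≤ h i := by
  induction n with
  | zero => simp
  | succ n ih =>
    rw [Function.iterate_succ_apply']
    rcases hfx : f ((stp f)^[n] i) with _ | j
    · simpa [stp, hfx] using ih
    · have h1 : h j < h ((stp f)^[n] i) := hh _ _ hfx
      have h2 : stp f ((stp f)^[n] i) = j := by simp [stp, hfx]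
      rw [h2]
      omega

private lemma iter_fixed {f : V → Option V} {h : V → ℕ}
    (hh : ∀ i j, f i = some j → h j < h i) (i : V) :
    stp f ((stp f)^[Fintype.card V] i) = (stp f)^[Fintype.card V] i := by
  set N := Fintype.card V with hN
  by_contra hfix
  have hnot : ∀ n ≤ N, stp f ((stp f)^[n] i) ≠ (stp f)^[n] i := by
    intro n hn hfx
    apply hfix
    have key : (stp f)^[N] i = (stp f)^[n] i := by
      have h2 : (stp f)^[N] i = (stp f)^[N - n] ((stp f)^[n] i) := by
        rw [← Function.iterate_add_apply]
        congr 1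
        omega
      rw [h2, Function.IsFixedPt.iterate hfx (N - n)]
    rw [key, hfx]
  have hstrict : ∀ n < N, h ((stp f)^[n + 1] i) < h ((stp f)^[n] i) := by
    intro n hn
    rw [Function.iterate_succ_apply']
    rcases hfx : f ((stp f)^[n] i) with _ | j
    · exact absurd (by simp [stp, hfx]) (hnot n hn.le)
    · have h2 : stp f ((stp f)^[n] i) = j := by simp [stp, hfx]
      rw [h2]
      exact hh _ _ hfx
  have hanti : ∀ a b : ℕ, a < b → b ≤ N → h ((stp f)^[b] i) < h ((stp f)^[a] i) := by
    intro a b hab hbN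
    induction b with
    | zero => omega
    | succ b ih =>
      rcases Nat.lt_or_ge a b with hab' | hab'
      · exact lt_trans (hstrict b (by omega)) (ih hab' (by omega))
      · have hba : a = b := by omega
        subst hba
        exact hstrict a (by omega)
  have hinj : Function.Injective (fun n : Fin (N + 1) => (stp f)^[(n : ℕ)] i) := by
    intro a b hab
    by_contra hne
    rcases Nat.lt_trichotomy (a : ℕ) (b : ℕ) with hlt | heq | hlt
    · have := hanti a b hlt (Nat.lt_succ_iff.mp b.isLt)
      simp only at hab
      rw [hab] at this; omega
    · exact hne (Fin.val_injective heq)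
    · have := hanti b a hlt (Nat.lt_succ_iff.mp a.isLt)
      simp only at hab
      rw [hab] at this; omega
  have hcard := Fintype.card_le_of_injective _ hinj
  rw [Fintype.card_fin] at hcard
  omega

private lemma rootOf_none {f : V → Option V} {x : V} (hx : f x = none) :
    rootOf f x = x := by
  rw [rootOf_def]
  have hfp : Function.IsFixedPt (stp f) x := by simp [Function.IsFixedPt, stp, hx]
  exact hfp.iterate _

private lemma rootOf_succ {f : V → Option V} {h : V → ℕ}
    (hh : ∀ i j, f i = some j → h j < h i) {i j : V} (hij : f i = some j) :
    rootOf f i = rootOf f j := by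
  rw [rootOf_def, rootOf_def]
  have h1 : (stp f)^[Fintype.card V + 1] i = (stp f)^[Fintype.card V] i := by
    rw [Function.iterate_succ_apply']; exact iter_fixed hh i
  rw [← h1, Function.iterate_succ_apply]
  have h2 : stp f i = j := by simp [stp, hij]
  rw [h2]

private lemma rootOf_self_none {f : V → Option V} {h : V → ℕ}
    (hh : ∀ i j, f i = some j → h j < h i) {x : V} (hx : rootOf f x = x) :
    f x = none := by
  rcases hfx : f x with _ | j
  · rfl
  · exfalso
    have h1 : rootOf f x = rootOf f j := rootOf_succ hh hfx
    have h2 : h (rootOf f j) ≤ h j := by rw [rootOf_def]; exact hmono hh _ j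
    have h3 : h j < h x := hh _ _ hfx
    rw [hx] at h1
    rw [← h1] at h2
    omega

end InsertAux

/-- inserting the new edge e = (u,v),
|F(G_k)| = |F(G_{k-1})| + |{φ ∈ F(G_{k-1}) : r_φ(u) = u, r_φ(v) ≠ u}|. -/
theorem insert_edge_card {V : Type*} [Fintype V] [DecidableEq V]
    (E : V → V → Prop) (hE : ∀ i, ¬ E i i)
    (u v : V) (huv : u ≠ v) (hnew : ¬ E u v) :
    (forests (fun a b => E a b ∨ (a = u ∧ b = v))).card
      = (forests E).card +
        ((forests E).filter (fun f => rootOf f u = u ∧ rootOf f v ≠ u)).card := by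
  set E' : V → V → Prop := fun a b => E a b ∨ (a = u ∧ b = v) with hE'
  have hsplit : (forests E').card
      = ((forests E').filter (fun f => f u = some v)).card
        + ((forests E').filter (fun f => ¬ f u = some v)).card :=
    (Finset.card_filter_add_card_filter_not _).symm
  have hA : (forests E').filter (fun f => ¬ f u = some v) = forests E := by
    ext f
    simp only [forests, Finset.mem_filter, Finset.mem_univ, true_and]
    constructor
    · rintro ⟨⟨hedge, hht⟩, hne⟩
      refine ⟨fun i j hij => ?_, hht⟩
      rcases hedge i j hij with h1 | ⟨rfl, rfl⟩
      · exact h1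
      · exact absurd hij hne
    · rintro ⟨hedge, hht⟩
      exact ⟨⟨fun i j hij => Or.inl (hedge i j hij), hht⟩,
        fun hc => hnew (hedge u v hc)⟩
  have hB : ((forests E').filter (fun f => f u = some v)).card
      = ((forests E).filter (fun f => rootOf f u = u ∧ rootOf f v ≠ u)).card := by
    refine Finset.card_bij' (fun f _ => Function.update f u none)
      (fun g _ => Function.update g u (some v)) ?_ ?_ ?_ ?_
    · -- forward membership
      intro f hf
      simp only [forests, Finset.mem_filter, Finset.mem_univ, true_and] at hf ⊢
      obtain ⟨⟨hedge, h, hh⟩, hfu⟩ := hf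
      have hgedge : ∀ i j, Function.update f u none i = some j → f i = some j := by
        intro i j hij
        by_cases hiu : i = u
        · subst hiu; simp at hij
        · rwa [Function.update_of_ne hiu] at hij
      have hhg : ∀ i j, Function.update f u none i = some j → h j < h i :=
        fun i j hij => hh i j (hgedge i j hij)
      have hedge' : ∀ i j, Function.update f u none i = some j → E i j := by
        intro i j hij
        rcases hedge i j (hgedge i j hij) with h1 | ⟨rfl, rfl⟩
        · exact h1
        · exfalso; simp at hij
      have hr1 : rootOf (Function.update f u none) u = u := rootOf_none (by simp)
      have hr2 : rootOf (Function.update f u none) v ≠ u := by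
        intro hc
        have h2 : h (rootOf (Function.update f u none) v) ≤ h v := by
          rw [rootOf_def]; exact hmono hhg _ v
        rw [hc] at h2
        have h3 : h v < h u := hh u v hfu
        exact absurd (lt_of_le_of_lt h2 h3) (lt_irrefl _)
      exact ⟨⟨hedge', h, hhg⟩, hr1, hr2⟩
    · -- backward membership
      intro g hg
      simp only [forests, Finset.mem_filter, Finset.mem_univ, true_and] at hg ⊢
      obtain ⟨⟨hedge, h, hh⟩, hru, hrv⟩ := hg
      have hgu : g u = none := rootOf_self_none hh hru
      set M : ℕ := (Finset.univ.sup h) + 1 with hM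
      have hedge' : ∀ i j, Function.update g u (some v) i = some j → E' i j := by
        intro i j hij
        by_cases hiu : i = u
        · subst hiu
          rw [Function.update_self] at hij
          exact Or.inr ⟨rfl, (Option.some.inj hij).symm⟩
        · rw [Function.update_of_ne hiu] at hij
          exact Or.inl (hedge i j hij)
      have hht' : ∀ i j, Function.update g u (some v) i = some j →
          (if rootOf g j = u then h j + M else h j) < (if rootOf g i = u then h i + M else h i) := by
        intro i j hij
        by_cases hiu : i = u
        · subst hiu
          rw [Function.update_self] at hij
          obtain rfl : v = j := Option.some.inj hij
          rw [if_pos hru, if_neg hrv]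
          have hle : h v ≤ Finset.univ.sup h := Finset.le_sup (Finset.mem_univ v)
          have hvM : h v < M := by rw [hM]; exact Nat.lt_succ_of_le hle
          exact lt_of_lt_of_le hvM (Nat.le_add_left M _)
        · rw [Function.update_of_ne hiu] at hij
          have hroots : rootOf g i = rootOf g j := rootOf_succ hh hij
          have hlt := hh i j hij
          rw [← hroots]
          by_cases hcase : rootOf g i = u
          · rw [if_pos hcase, if_pos hcase]; exact Nat.add_lt_add_right hlt M
          · rw [if_neg hcase, if_neg hcase]; exact hlt
      exact ⟨⟨hedge', fun i => if rootOf g i = u then h i + M else h i, hht'⟩, by simp⟩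
    · -- left inverse
      intro f hf
      simp only [forests, Finset.mem_filter] at hf
      funext x
      by_cases hx : x = u
      · subst hx; simp [hf.2]
      · simp [Function.update_of_ne hx]
    · -- right inverse
      intro g hg
      simp only [forests, Finset.mem_filter, Finset.mem_univ, true_and] at hg
      obtain ⟨⟨hedge, h, hh⟩, hru, hrv⟩ := hg
      have hgu : g u = none := rootOf_self_none hh hru
      funext x
      by_cases hx : x = u
      · subst hx; simp [hgu]
      · simp [Function.update_of_ne hx]
  rw [hsplit, hA, hB, Nat.add_comm]
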